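/- Let ρ ≥ 2 and n ≥ 2 be integers. Then for every 0 ≤ k ≤ n-1, the 2-adic valuation of binom(2k,k)^ρ · 4^{ρ(n-1-k)} is at least (ρ-2) plus the 2-adic valuation of n·binom(2n,n). -/

import Mathlib

open Nat

private lemma vmul (m : ℕ) :
    padicValNat 2 (m + 1) + padicValNat 2 (Nat.centralBinom (m + 1)) =
      1 + padicValNat 2 (Nat.centralBinom m) := by
  have h := Nat.succ_mul_centralBinom_succ m
  have h1 : padicValNat 2 ((m + 1) * Nat.centralBinom (m + 1)) =
      padicValNat 2 (m + 1) + padicValNat 2 (Nat.centralBinom (m + 1)) :=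
    padicValNat.mul (by omega) (Nat.centralBinom_ne_zero _)
  have h2 : padicValNat 2 (2 * (2 * m + 1) * Nat.centralBinom m) =
      1 + padicValNat 2 (Nat.centralBinom m) := by
    rw [padicValNat.mul (by positivity) (Nat.centralBinom_ne_zero _),
      padicValNat.mul (by norm_num) (by omega),
      padicValNat.self (by norm_num)]
    have : padicValNat 2 (2 * m + 1) = 0 :=
      padicValNat.eq_zero_of_not_dvd (by omega)
    omega
  rw [← h1, h, h2]

private lemma vstep (m : ℕ) :
    padicValNat 2 (Nat.centralBinom (m + 1)) ≤ padicValNat 2 (Nat.centralBinom m) + 1 := by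
  have := vmul m
  omega

private lemma vadd (k d : ℕ) :
    padicValNat 2 (Nat.centralBinom (k + d)) ≤ padicValNat 2 (Nat.centralBinom k) + d := by
  induction d with
  | zero => simp
  | succ d ih =>
    have := vstep (k + d)
    have h2 : k + (d + 1) = (k + d) + 1 := by omega
    rw [h2]
    omega

private lemma vpos (m : ℕ) : 1 ≤ padicValNat 2 (Nat.centralBinom (m + 1)) :=
  one_le_padicValNat_of_dvd (Nat.centralBinom_ne_zero _) (Nat.two_dvd_centralBinom_succ m)

theorem ord_two_term_ge (ρ n k : ℕ) (hρ : 2 ≤ ρ) (hn : 2 ≤ n) (hk : k ≤ n - 1) :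
    (ρ - 2) + padicValNat 2 (n * Nat.choose (2 * n) n) ≤
      padicValNat 2 (Nat.choose (2 * k) k ^ ρ * 4 ^ (ρ * (n - 1 - k))) := by
  have hcb : ∀ m, Nat.choose (2 * m) m = Nat.centralBinom m := fun m => rfl
  set d : ℕ := n - 1 - k with hd
  -- LHS
  have hL : padicValNat 2 (n * Nat.choose (2 * n) n) =
      1 + padicValNat 2 (Nat.centralBinom (n - 1)) := by
    have hn1 : n = (n - 1) + 1 := by omega
    have h1 : padicValNat 2 (n * Nat.choose (2 * n) n) =
        padicValNat 2 n + padicValNat 2 (Nat.centralBinom n) := by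
      rw [hcb]
      exact padicValNat.mul (by omega) (Nat.centralBinom_ne_zero _)
    have h2 := vmul (n - 1)
    rw [← hn1] at h2
    omega
  -- RHS
  have hR : padicValNat 2 (Nat.choose (2 * k) k ^ ρ * 4 ^ (ρ * (n - 1 - k))) =
      ρ * padicValNat 2 (Nat.centralBinom k) + 2 * (ρ * d) := by
    have h4 : (4 : ℕ) ^ (ρ * d) = 2 ^ (2 * (ρ * d)) := by
      rw [show (4 : ℕ) = 2 ^ 2 by norm_num, ← pow_mul]
    rw [hcb, ← hd, h4,
      padicValNat.mul (pow_ne_zero _ (Nat.centralBinom_ne_zero _)) (by positivity),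
      padicValNat.pow _ _, padicValNat.prime_pow]
  rw [hL, hR]
  have hsplit : n - 1 = k + d := by omega
  have hvadd : padicValNat 2 (Nat.centralBinom (n - 1)) ≤
      padicValNat 2 (Nat.centralBinom k) + d := by rw [hsplit]; exact vadd k d
  obtain ⟨c, rfl⟩ : ∃ c, ρ = c + 2 := ⟨ρ - 2, by omega⟩
  have hc2 : c + 2 - 2 = c := by omega
  rw [hc2]
  rcases Nat.eq_zero_or_pos d with hd0 | hd1
  · have hk1 : k = (n - 2) + 1 := by omega
    have hvk : 1 ≤ padicValNat 2 (Nat.centralBinom k) := by rw [hk1]; exact vpos (n - 2)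
    rw [hd0] at hvadd ⊢
    nlinarith [hvadd, hvk]
  · have h1 : 2 * c + 3 ≤ 2 * (c * d) + 3 * d := by
      calc 2 * c + 3 = (2 * c + 3) * 1 := by ring
        _ ≤ (2 * c + 3) * d := Nat.mul_le_mul_left _ hd1
        _ = 2 * (c * d) + 3 * d := by ring
    have h2 : (c + 2) * padicValNat 2 (Nat.centralBinom k) + 2 * ((c + 2) * d) =
        c * padicValNat 2 (Nat.centralBinom k) +
          2 * padicValNat 2 (Nat.centralBinom k) + (2 * (c * d) + 4 * d) := by ring
    rw [h2]
    generalize c * padicValNat 2 (Nat.centralBinom k) = P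
    generalize c * d = Q at h1 ⊢
    omega
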